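/- Let i = [[0,1],[−1,0]] and define φ : sl(2,ℝ) → sl(2,ℝ) by φ(α) = −i·α·i. Then φ∘φ = Id, for all α, γ ∈ sl(2,ℝ) one has g((α,φ(α)), J(γ,φ(γ))) = 0, and furthermore P(i,φ(i)) = (i,φ(i)), P(j,φ(j)) = −(j,φ(j)), P(k,φ(k)) = −(k,φ(k)), where j = [[0,1],[1,0]] and k = [[1,0],[0,−1]]. (This is the algebraic content of the facts that the immersion u ↦ (u, i·u·i) of SL(2,ℝ) into SL(2,ℝ)×SL(2,ℝ) is Lagrangian with constant angle functions (0,π,π).) -/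
import Mathlib


open Matrix

/-- The indefinite inner product `⟨a,b⟩ = -(1/2)·Trace(adj(a)·b)` on 2×2 real matrices. -/
noncomputable def ip (a b : Matrix (Fin 2) (Fin 2) ℝ) : ℝ :=
  -(1/2 : ℝ) * (a.adjugate * b).trace

/-- The product metric `⟨(α,β),(γ,δ)⟩_E = ⟨α,γ⟩ + ⟨β,δ⟩`. -/
noncomputable def ipE (X Y : Matrix (Fin 2) (Fin 2) ℝ × Matrix (Fin 2) (Fin 2) ℝ) : ℝ :=
  ip X.1 Y.1 + ip X.2 Y.2

/-- The nearly Kähler metric `g`. -/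
noncomputable def g (X Y : Matrix (Fin 2) (Fin 2) ℝ × Matrix (Fin 2) (Fin 2) ℝ) : ℝ :=
  (2/3 : ℝ) * ipE X Y - (1/3 : ℝ) * ipE (X.2, X.1) Y

/-- The almost complex structure `J(α,β) = (1/√3)·(α − 2β, 2α − β)`. -/
noncomputable def Jmap (X : Matrix (Fin 2) (Fin 2) ℝ × Matrix (Fin 2) (Fin 2) ℝ) :
    Matrix (Fin 2) (Fin 2) ℝ × Matrix (Fin 2) (Fin 2) ℝ :=
  (Real.sqrt 3)⁻¹ • (X.1 - (2:ℝ) • X.2, (2:ℝ) • X.1 - X.2)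

/-- The almost product structure `P(α,β) = (β,α)`. -/
def Pmap (X : Matrix (Fin 2) (Fin 2) ℝ × Matrix (Fin 2) (Fin 2) ℝ) :
    Matrix (Fin 2) (Fin 2) ℝ × Matrix (Fin 2) (Fin 2) ℝ :=
  (X.2, X.1)

/-- The cross product `α×β = (1/2)(αβ − βα)` on `sl(2,ℝ)`. -/
noncomputable def cross (a b : Matrix (Fin 2) (Fin 2) ℝ) : Matrix (Fin 2) (Fin 2) ℝ :=
  (1/2 : ℝ) • (a * b - b * a)

/-- The tensor `G`. -/
noncomputable def Gmap (X Y : Matrix (Fin 2) (Fin 2) ℝ × Matrix (Fin 2) (Fin 2) ℝ) :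
    Matrix (Fin 2) (Fin 2) ℝ × Matrix (Fin 2) (Fin 2) ℝ :=
  (2 / (3 * Real.sqrt 3)) •
    (-(cross X.1 Y.1) - cross X.1 Y.2 + cross Y.1 X.2 + (2:ℝ) • cross X.2 Y.2,
     -((2:ℝ) • cross X.1 Y.1) + cross X.1 Y.2 - cross Y.1 X.2 + cross X.2 Y.2)

/-- The immersion `u ↦ (u, i·u·i)` is Lagrangian with constant angle functions `(0,π,π)`. -/
theorem stmt_14 :
    let i : Matrix (Fin 2) (Fin 2) ℝ := !![0, 1; -1, 0]
    let j : Matrix (Fin 2) (Fin 2) ℝ := !![0, 1; 1, 0]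
    let k : Matrix (Fin 2) (Fin 2) ℝ := !![1, 0; 0, -1]
    let φ : Matrix (Fin 2) (Fin 2) ℝ → Matrix (Fin 2) (Fin 2) ℝ := fun α => -(i * α * i)
    (∀ α : Matrix (Fin 2) (Fin 2) ℝ, α.trace = 0 → φ (φ α) = α) ∧
    (∀ α γ : Matrix (Fin 2) (Fin 2) ℝ, α.trace = 0 → γ.trace = 0 →
      g (α, φ α) (Jmap (γ, φ γ)) = 0) ∧
    Pmap (i, φ i) = (i, φ i) ∧
    Pmap (j, φ j) = -(j, φ j) ∧
    Pmap (k, φ k) = -(k, φ k) := by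
  intro i j k φ
  have hii : i * i = -1 := by
    simp only [i]; norm_num [Matrix.mul_fin_two, ← Matrix.ext_iff, Fin.forall_fin_two]
  refine ⟨?_, ?_, ?_, ?_, ?_⟩
  · intro α _
    show -(i * -(i * α * i) * i) = α
    rw [show i * -(i * α * i) * i = -(i * i * α * (i * i)) by noncomm_ring]
    rw [hii]; noncomm_ring
  · intro α γ hα hγ
    have hα' : α 1 1 = -α 0 0 := by
      have := hα; simp [Matrix.trace_fin_two] at this; linarith
    have hγ' : γ 1 1 = -γ 0 0 := by
      have := hγ; simp [Matrix.trace_fin_two] at this; linarith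
    simp only [g, ipE, ip, Jmap, φ, i]
    simp [Matrix.adjugate_fin_two, Matrix.trace_fin_two, Matrix.mul_apply,
      Fin.sum_univ_two, Matrix.smul_apply, Matrix.sub_apply, Matrix.neg_apply,
      Matrix.vecMul, dotProduct, Matrix.vecHead, Matrix.vecTail,
      hα', hγ']
    ring
  · show Pmap (i, φ i) = (i, φ i)
    have : φ i = i := by
      show -(i * i * i) = i
      rw [hii]; noncomm_ring
    rw [this]; rfl
  · show Pmap (j, φ j) = -(j, φ j)
    simp only [Pmap, φ, Prod.neg_mk, Prod.mk.injEq, j, i]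
    constructor <;> norm_num [Matrix.mul_fin_two, ← Matrix.ext_iff, Fin.forall_fin_two]
  · show Pmap (k, φ k) = -(k, φ k)
    simp only [Pmap, φ, Prod.neg_mk, Prod.mk.injEq, k, i]
    constructor <;> norm_num [Matrix.mul_fin_two, ← Matrix.ext_iff, Fin.forall_fin_two]
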